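/- Let r ≥ 1 be an integer and let m₁, m₂, n₁, n₂ be integers coprime to r. For integers a, b coprime to r define the multiset W(a,b) over ZMod r as the multiset, indexed by t₁ ∈ {0,…,r−1}, of the elements ((t₁ + t₂ + 1 : ℕ) : ZMod r) where t₂ ∈ {0,…,r−1} is the unique solution of a·(t₁+1) + b·t₂ ≡ 0 (mod r). Then W(m₁,m₂) = W(n₁,n₂) if and only if Int.gcd (m₂ − m₁) r = Int.gcd (n₂ − n₁) r. -/

import Mathlib

/-- The multiset `W(a,b)` over `ZMod r`: indexed by `t₁ ∈ {0,…,r−1}`, its elements are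
`((t₁ + t₂ + 1 : ℕ) : ZMod r)` where `t₂ ∈ {0,…,r−1}` is the unique solution of
`a·(t₁+1) + b·t₂ ≡ 0 (mod r)` (for `b` coprime to `r` this is
`t₂ = (−b⁻¹·a·(t₁+1) : ZMod r).val`). -/
def Wms (r : ℕ) (a b : ℤ) : Multiset (ZMod r) :=
  (Multiset.range r).map fun t₁ =>
    ((t₁ + (-(b : ZMod r)⁻¹ * (a : ZMod r) * (((t₁ + 1 : ℕ) : ZMod r))).val + 1 : ℕ) : ZMod r)

open Finset AddSubgroup

section helpers

variable {r : ℕ} [NeZero r]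

lemma mem_zmultiples_iff_mul (c z : ZMod r) :
    z ∈ zmultiples c ↔ ∃ x : ZMod r, x * c = z := by
  rw [AddSubgroup.mem_zmultiples_iff]
  constructor
  · rintro ⟨n, rfl⟩
    exact ⟨(n : ZMod r), (zsmul_eq_mul c n).symm⟩
  · rintro ⟨x, rfl⟩
    exact ⟨(x.val : ℤ), by push_cast [zsmul_eq_mul, ZMod.natCast_val, ZMod.cast_id]; ring⟩

lemma zmultiples_eq_of_mul {c d : ZMod r} (h1 : ∃ x, x * d = c) (h2 : ∃ x, x * c = d) :
    zmultiples c = zmultiples d := by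
  obtain ⟨w, hw⟩ := h1
  obtain ⟨v, hv⟩ := h2
  ext z
  simp only [mem_zmultiples_iff_mul]
  constructor
  · rintro ⟨x, rfl⟩
    exact ⟨x * w, by rw [mul_assoc, hw]⟩
  · rintro ⟨x, rfl⟩
    exact ⟨x * v, by rw [mul_assoc, hv]⟩

lemma card_zmultiples_eq (c : ZMod r) :
    Nat.card (zmultiples c) = r / Nat.gcd r c.val := by
  rw [Nat.card_zmultiples]
  conv_lhs => rw [show c = ((c.val : ℕ) : ZMod r) by simp [ZMod.natCast_val, ZMod.cast_id]]
  exact ZMod.addOrderOf_coe c.val (NeZero.ne r)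

lemma gcd_eq_div_card (c : ZMod r) :
    Nat.gcd r c.val = r / Nat.card (zmultiples c) := by
  rw [card_zmultiples_eq, Nat.div_div_self (Nat.gcd_dvd_left r c.val) (NeZero.ne r)]

lemma zmultiples_eq_gcd (c : ZMod r) :
    zmultiples c = zmultiples ((Nat.gcd r c.val : ℕ) : ZMod r) := by
  apply zmultiples_eq_of_mul
  · obtain ⟨k, hk⟩ := Nat.gcd_dvd_right r c.val
    exact ⟨(k : ZMod r), by rw [mul_comm, ← Nat.cast_mul, ← hk, ZMod.natCast_val, ZMod.cast_id]⟩
  · refine ⟨(Nat.gcdB r c.val : ZMod r), ?_⟩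
    have h := Nat.gcd_eq_gcd_ab r c.val
    have : ((Nat.gcd r c.val : ℤ) : ZMod r)
        = ((r * Nat.gcdA r c.val + c.val * Nat.gcdB r c.val : ℤ) : ZMod r) := by rw [← h]
    push_cast at this
    rw [ZMod.natCast_self, ZMod.natCast_val, ZMod.cast_id] at this
    rw [this]; ring

lemma zmultiples_eq_iff_gcd {c d : ZMod r} :
    zmultiples c = zmultiples d ↔ Nat.gcd r c.val = Nat.gcd r d.val := by
  constructor
  · intro h
    rw [gcd_eq_div_card, gcd_eq_div_card, h]
  · intro h
    rw [zmultiples_eq_gcd c, zmultiples_eq_gcd d, h]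

lemma ker_card (c : ZMod r) :
    (Finset.univ.filter fun x : ZMod r => x * c = 0).card = Nat.gcd r c.val := by
  classical
  set f : ZMod r →+ ZMod r := AddMonoidHom.mulRight c with hf
  have hrange : f.range = zmultiples c := by
    ext z
    simp only [AddMonoidHom.mem_range, mem_zmultiples_iff_mul, hf,
      AddMonoidHom.coe_mulRight]
  have hcard : Nat.card (ZMod r) = Nat.card (ZMod r ⧸ f.ker) * Nat.card f.ker :=
    AddSubgroup.card_eq_card_quotient_mul_card_addSubgroup f.ker
  have hquot : Nat.card (ZMod r ⧸ f.ker) = Nat.card f.range :=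
    Nat.card_congr (QuotientAddGroup.quotientKerEquivRange f).toEquiv
  have hZ : Nat.card (ZMod r) = r := by
    rw [Nat.card_eq_fintype_card, ZMod.card]
  have hrange' : Nat.card f.range = r / Nat.gcd r c.val := by
    rw [hrange, card_zmultiples_eq]
  have hker : Nat.card f.ker = Nat.gcd r c.val := by
    have hg : Nat.gcd r c.val ∣ r := Nat.gcd_dvd_left r c.val
    have h1 : r = r / Nat.gcd r c.val * Nat.card f.ker := by
      rw [← hrange', ← hquot, ← hcard, hZ]
    have hdivpos : 0 < r / Nat.gcd r c.val := by
      apply Nat.div_pos (Nat.le_of_dvd (Nat.pos_of_ne_zero (NeZero.ne r)) hg)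
      exact Nat.pos_of_ne_zero fun h0 => (NeZero.ne r) (by
        have := Nat.eq_zero_of_gcd_eq_zero_left h0; exact this)
    have h2 : r / Nat.gcd r c.val * Nat.card f.ker
        = r / Nat.gcd r c.val * Nat.gcd r c.val := by
      rw [← h1, Nat.div_mul_cancel hg]
    exact Nat.eq_of_mul_eq_mul_left hdivpos h2
  rw [← hker]
  rw [Nat.card_eq_fintype_card, ← Fintype.card_subtype]
  apply Fintype.card_congr
  apply Equiv.subtypeEquivRight
  intro x
  simp [hf, AddMonoidHom.mem_ker]

lemma count_map_mul (c z : ZMod r) :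
    Multiset.count z (Finset.univ.val.map (· * c))
      = (Finset.univ.filter fun x : ZMod r => x * c = z).card := by
  classical
  rw [Multiset.count_map]
  congr 1
  ext x
  simp [eq_comm]

lemma fiber_card_eq (c z : ZMod r) (hz : z ∈ zmultiples c) :
    (Finset.univ.filter fun x : ZMod r => x * c = z).card
      = (Finset.univ.filter fun x : ZMod r => x * c = 0).card := by
  classical
  obtain ⟨x₀, hx₀⟩ := (mem_zmultiples_iff_mul c z).mp hz
  apply Finset.card_bij' (fun x _ => x - x₀) (fun y _ => y + x₀)
  · intro x hx
    simp only [Finset.mem_filter, Finset.mem_univ, true_and] at hx ⊢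
    rw [sub_mul, hx, hx₀, sub_self]
  · intro y hy
    simp only [Finset.mem_filter, Finset.mem_univ, true_and] at hy ⊢
    rw [add_mul, hy, hx₀, zero_add]
  · intro x _; ring
  · intro y _; ring

lemma key_iff (c d : ZMod r) :
    Finset.univ.val.map (· * c) = Finset.univ.val.map (· * d)
      ↔ Nat.gcd r c.val = Nat.gcd r d.val := by
  classical
  constructor
  · intro h
    have := congrArg (Multiset.count (0 : ZMod r)) h
    rwa [count_map_mul, count_map_mul, ker_card, ker_card] at this
  · intro h
    have hzm : zmultiples c = zmultiples d := zmultiples_eq_iff_gcd.mpr h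
    ext z
    rw [count_map_mul, count_map_mul]
    by_cases hz : z ∈ zmultiples c
    · rw [fiber_card_eq c z hz, fiber_card_eq d z (hzm ▸ hz), ker_card, ker_card, h]
    · have h1 : (Finset.univ.filter fun x : ZMod r => x * c = z) = ∅ := by
        apply Finset.filter_eq_empty_iff.mpr
        intro x _ hx
        exact hz ((mem_zmultiples_iff_mul c z).mpr ⟨x, hx⟩)
      have h2 : (Finset.univ.filter fun x : ZMod r => x * d = z) = ∅ := by
        apply Finset.filter_eq_empty_iff.mpr
        intro x _ hx
        exact hz (hzm ▸ (mem_zmultiples_iff_mul d z).mpr ⟨x, hx⟩)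
      rw [h1, h2]

lemma int_gcd_emod (z : ℤ) (r : ℕ) : Int.gcd (z % r) r = Int.gcd z r := by
  apply Nat.dvd_antisymm
  · rw [← Int.natCast_dvd_natCast]
    apply Int.dvd_coe_gcd
    · have h2 : (Int.gcd (z % r) r : ℤ) ∣ z % r + r * (z / r) :=
        dvd_add (Int.gcd_dvd_left _ _) ((Int.gcd_dvd_right _ _).mul_right _)
      rwa [Int.emod_add_mul_ediv] at h2
    · exact Int.gcd_dvd_right _ _
  · rw [← Int.natCast_dvd_natCast]
    apply Int.dvd_coe_gcd
    · have h2 : (Int.gcd z r : ℤ) ∣ z - r * (z / r) :=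
        dvd_sub (Int.gcd_dvd_left _ _) ((Int.gcd_dvd_right _ _).mul_right _)
      rwa [← Int.emod_def] at h2
    · exact Int.gcd_dvd_right _ _

lemma gcd_val_intCast (z : ℤ) : Nat.gcd r ((z : ZMod r)).val = Int.gcd z r := by
  have h : (((z : ZMod r)).val : ℤ) = z % r := ZMod.val_intCast z
  rw [← int_gcd_emod z r, ← h]
  rw [Int.gcd_natCast_natCast, Nat.gcd_comm]

lemma isUnit_of_gcd_val (x : ZMod r) (h : Nat.gcd r x.val = 1) : IsUnit x := by
  have : x = ((x.val : ℕ) : ZMod r) := by simp [ZMod.natCast_val, ZMod.cast_id]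
  rw [this, ZMod.isUnit_iff_coprime]
  rwa [Nat.Coprime, Nat.gcd_comm]

lemma gcd_val_unit_mul {u : ZMod r} (hu : IsUnit u) (x : ZMod r) :
    Nat.gcd r (u * x).val = Nat.gcd r x.val := by
  rw [← zmultiples_eq_iff_gcd]
  apply zmultiples_eq_of_mul
  · exact ⟨u, rfl⟩
  · exact ⟨u⁻¹, by rw [mul_comm u x, ← mul_assoc, mul_comm u⁻¹ x, mul_assoc,
      ZMod.inv_mul_of_unit u hu, mul_one]⟩

lemma range_map_cast (hr : r ≠ 0) :
    (Multiset.range r).map (fun t : ℕ => ((t : ZMod r) + 1)) = Finset.univ.val := by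
  classical
  have hnodup : ((Multiset.range r).map (fun t : ℕ => ((t : ZMod r) + 1))).Nodup := by
    apply Multiset.Nodup.map_on _ (Multiset.nodup_range r)
    intro x hx y hy hxy
    rw [Multiset.mem_range] at hx hy
    have : (x : ZMod r) = (y : ZMod r) := by
      have := add_right_cancel hxy
      exact this
    have hvx := ZMod.val_cast_of_lt hx
    have hvy := ZMod.val_cast_of_lt hy
    rw [← hvx, ← hvy, this]
  let s : Finset (ZMod r) := ⟨_, hnodup⟩
  have hs : s = Finset.univ := by
    apply Finset.eq_univ_of_card
    rw [ZMod.card]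
    simp [s, Multiset.card_map]
  exact congrArg Finset.val hs

lemma Wms_eq_map (a b : ℤ) (hb : IsUnit ((b : ZMod r))) :
    Wms r a b = Finset.univ.val.map (· * (1 - ((b : ZMod r))⁻¹ * (a : ZMod r))) := by
  have hstep : ∀ t₁ : ℕ,
      (((t₁ + (-(b : ZMod r)⁻¹ * (a : ZMod r) * (((t₁ + 1 : ℕ) : ZMod r))).val + 1 : ℕ) : ZMod r))
        = ((t₁ : ZMod r) + 1) * (1 - ((b : ZMod r))⁻¹ * (a : ZMod r)) := by
    intro t₁
    push_cast [ZMod.natCast_val, ZMod.cast_id]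
    ring
  unfold Wms
  rw [Multiset.map_congr rfl (fun t₁ _ => hstep t₁)]
  rw [← range_map_cast (NeZero.ne r), Multiset.map_map]
  rfl

end helpers

theorem stmt_7 (r : ℕ) (hr : 1 ≤ r) (m₁ m₂ n₁ n₂ : ℤ)
    (hm₁ : Int.gcd m₁ r = 1) (hm₂ : Int.gcd m₂ r = 1)
    (hn₁ : Int.gcd n₁ r = 1) (hn₂ : Int.gcd n₂ r = 1) :
    Wms r m₁ m₂ = Wms r n₁ n₂ ↔ Int.gcd (m₂ - m₁) r = Int.gcd (n₂ - n₁) r := by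
  have : NeZero r := ⟨Nat.one_le_iff_ne_zero.mp hr⟩
  have hum₂ : IsUnit ((m₂ : ZMod r)) :=
    isUnit_of_gcd_val _ (by rw [gcd_val_intCast]; exact hm₂)
  have hun₂ : IsUnit ((n₂ : ZMod r)) :=
    isUnit_of_gcd_val _ (by rw [gcd_val_intCast]; exact hn₂)
  have hinvm : IsUnit (((m₂ : ZMod r))⁻¹) :=
    IsUnit.of_mul_eq_one _ (ZMod.inv_mul_of_unit _ hum₂)
  have hinvn : IsUnit (((n₂ : ZMod r))⁻¹) :=
    IsUnit.of_mul_eq_one _ (ZMod.inv_mul_of_unit _ hun₂)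
  have hcm : (1 - ((m₂ : ZMod r))⁻¹ * (m₁ : ZMod r))
      = ((m₂ : ZMod r))⁻¹ * (((m₂ - m₁ : ℤ) : ZMod r)) := by
    push_cast
    rw [mul_sub, ZMod.inv_mul_of_unit _ hum₂]
  have hcn : (1 - ((n₂ : ZMod r))⁻¹ * (n₁ : ZMod r))
      = ((n₂ : ZMod r))⁻¹ * (((n₂ - n₁ : ℤ) : ZMod r)) := by
    push_cast
    rw [mul_sub, ZMod.inv_mul_of_unit _ hun₂]
  rw [Wms_eq_map m₁ m₂ hum₂, Wms_eq_map n₁ n₂ hun₂, key_iff,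
    hcm, hcn, gcd_val_unit_mul hinvm, gcd_val_unit_mul hinvn,
    gcd_val_intCast, gcd_val_intCast]
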